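/- Let H be a connected Hamiltonian subcubic graph on an odd number of vertices with Hamiltonian cycle v1…v_{2p+1}, and suppose there exists an index i such that deg(v_{i−1}) = deg(v_{i+1}) = 2 (indices mod 2p+1). Then χ'(H) = 3. -/

import Mathlib

open Relation Function

namespace Stmt11Aux


variable {α : Type*} (f g : α → α) (x0 : α)

/-- alternating walk: g first, then f, alternating. -/
def walk : ℕ → α
  | 0 => x0
  | (k+1) => if k % 2 = 0 then g (walk k) else f (walk k)

variable {f g x0}

lemma walk_succ_even {k : ℕ} (h : k % 2 = 0) : walk f g x0 (k+1) = g (walk f g x0 k) := by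
  simp [walk, h]

lemma walk_succ_odd {k : ℕ} (h : k % 2 = 1) : walk f g x0 (k+1) = f (walk f g x0 k) := by
  simp [walk, h]

lemma reach_mem_walk (hf : Involutive f) (hg : Involutive g) (h0 : f x0 = x0)
    {t : α} (h : ReflTransGen (fun s t => t = f s ∨ t = g s) x0 t) :
    ∃ k, walk f g x0 k = t := by
  induction h with
  | refl => exact ⟨0, rfl⟩
  | tail _hab hbc ih =>
    obtain ⟨k, hk⟩ := ih
    rcases hbc with hc | hc
    · -- next = f prev
      rcases Nat.mod_two_eq_zero_or_one k with hk2 | hk2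
      · rcases Nat.eq_zero_or_pos k with rfl | hpos
        · refine ⟨0, ?_⟩
          have hx : walk f g x0 0 = x0 := rfl
          rw [hx, hc, ← hk, hx, h0]
        · obtain ⟨m, hm'⟩ : ∃ m, k = m + 1 := ⟨k - 1, by omega⟩
          subst hm'
          have hm : m % 2 = 1 := by omega
          refine ⟨m, ?_⟩
          have h2 := walk_succ_odd (f := f) (g := g) (x0 := x0) hm
          rw [hc, ← hk, h2, hf]
      · refine ⟨k+1, ?_⟩
        rw [walk_succ_odd hk2, hk, hc]
    · -- next = g prev
      rcases Nat.mod_two_eq_zero_or_one k with hk2 | hk2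
      · refine ⟨k+1, ?_⟩
        rw [walk_succ_even hk2, hk, hc]
      · obtain ⟨m, hm'⟩ : ∃ m, k = m + 1 := ⟨k - 1, by omega⟩
        subst hm'
        have hm : m % 2 = 0 := by omega
        refine ⟨m, ?_⟩
        have h2 := walk_succ_even (f := f) (g := g) (x0 := x0) hm
        rw [hc, ← hk, h2, hg]

lemma walk_reflect (hf : Involutive f) (hg : Involutive g)
    {j : ℕ} (hj : j % 2 = 1) (hfix : f (walk f g x0 j) = walk f g x0 j) :
    ∀ r, r ≤ j → walk f g x0 (j + 1 + r) = walk f g x0 (j - r) := by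
  intro r
  induction r with
  | zero => intro _; simpa [walk_succ_odd hj] using hfix
  | succ r ih =>
    intro hr
    have ihr := ih (by omega)
    have h1 : j + 1 + (r+1) = (j + 1 + r) + 1 := by omega
    have h2 : j - r = (j - (r+1)) + 1 := by omega
    rcases Nat.mod_two_eq_zero_or_one r with hre' | hro'
    · have e1 : (j + 1 + r) % 2 = 0 := by omega
      have e2 : (j - (r+1)) % 2 = 0 := by omega
      rw [h1, walk_succ_even e1, ihr, h2, walk_succ_even e2, hg]
    · have e1 : (j + 1 + r) % 2 = 1 := by omega
      have e2 : (j - (r+1)) % 2 = 1 := by omega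
      rw [h1, walk_succ_odd e1, ihr, h2, walk_succ_odd e2, hf]

lemma walk_periodic (hf : Involutive f) (hg : Involutive g) (h0 : f x0 = x0)
    {j : ℕ} (hj : j % 2 = 1) (hfix : f (walk f g x0 j) = walk f g x0 j) :
    ∀ k, walk f g x0 (k + (2*j+2)) = walk f g x0 k := by
  have hT0 : walk f g x0 (2*j+1) = x0 := by
    have := walk_reflect hf hg hj hfix j le_rfl
    simp [show j + 1 + j = 2*j+1 by omega] at this; exact this
  have hT1 : walk f g x0 (2*j+2) = x0 := by
    have : (2*j+1) % 2 = 1 := by omega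
    rw [show 2*j+2 = (2*j+1)+1 by omega, walk_succ_odd this, hT0, h0]
  intro k
  induction k with
  | zero => simp only [zero_add]; exact hT1
  | succ k ih =>
    have hpar : (k + (2*j+2)) % 2 = k % 2 := by omega
    rcases Nat.mod_two_eq_zero_or_one k with hk' | hk'
    · rw [show k + 1 + (2*j+2) = (k + (2*j+2)) + 1 by omega,
        walk_succ_even (by omega), ih, walk_succ_even hk']
    · rw [show k + 1 + (2*j+2) = (k + (2*j+2)) + 1 by omega,
        walk_succ_odd (by omega), ih, walk_succ_odd hk']

lemma two_invol_dichotomy (hf : Involutive f) (hg : Involutive g)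
    {a b : α} (h0 : f x0 = x0) (ha : f a = a) (hb : f b = b)
    (hab : a ≠ b) (ha0 : a ≠ x0) (hb0 : b ≠ x0) :
    ¬ ReflTransGen (fun s t => t = f s ∨ t = g s) x0 a ∨
    ¬ ReflTransGen (fun s t => t = f s ∨ t = g s) x0 b := by
  by_contra hcon
  push_neg at hcon
  obtain ⟨hra, hrb⟩ := hcon
  have hea : ∃ k, walk f g x0 k = a := reach_mem_walk hf hg h0 hra
  have heb : ∃ k, walk f g x0 k = b := reach_mem_walk hf hg h0 hrb
  -- minimal indices
  classical
  set j := Nat.find hea with hjdef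
  set l := Nat.find heb with hldef
  have hja : walk f g x0 j = a := Nat.find_spec hea
  have hlb : walk f g x0 l = b := Nat.find_spec heb
  have hjmin : ∀ r < j, walk f g x0 r ≠ a := fun r hr => Nat.find_min hea hr
  have hlmin : ∀ r < l, walk f g x0 r ≠ b := fun r hr => Nat.find_min heb hr
  -- both odd
  have hodd : ∀ (c : α) (m : ℕ), f c = c → c ≠ x0 → walk f g x0 m = c →
      (∀ r < m, walk f g x0 r ≠ c) → m % 2 = 1 := by
    intro c m hfc hc0 hm hmin
    rcases Nat.eq_zero_or_pos m with rfl | hpos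
    · exact absurd hm.symm hc0
    rcases Nat.mod_two_eq_zero_or_one m with hme | hmo
    · exfalso
      obtain ⟨k, hk0⟩ : ∃ k, m = k + 1 := ⟨m - 1, by omega⟩
      subst hk0
      have hk : k % 2 = 1 := by omega
      have h1 : f (walk f g x0 k) = c := by
        rw [← walk_succ_odd (f := f) (g := g) (x0 := x0) hk]; exact hm
      have h3 : walk f g x0 k = c := by
        have h2 := congrArg f h1
        rwa [hf, hfc] at h2
      exact hmin k (by omega) h3
    · exact hmo
  have hjodd : j % 2 = 1 := hodd a j ha ha0 hja hjmin
  have hlodd : l % 2 = 1 := hodd b l hb hb0 hlb hlmin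
  -- helper: if m1 < m2 minimal indices, contradiction
  have key : ∀ (c1 c2 : α) (m1 m2 : ℕ), m1 % 2 = 1 →
      walk f g x0 m1 = c1 → walk f g x0 m2 = c2 →
      (∀ r < m2, walk f g x0 r ≠ c2) → f c1 = c1 → m1 < m2 → False := by
    intro c1 c2 m1 m2 hm1odd hm1 hm2 hm2min hfc1 hlt
    have hfix : f (walk f g x0 m1) = walk f g x0 m1 := by rw [hm1]; exact hfc1
    -- reduce m2 modulo period T = 2*m1+2
    set T := 2*m1 + 2 with hT
    have hper := walk_periodic hf hg h0 hm1odd hfix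
    have hmod : ∀ k, walk f g x0 k = walk f g x0 (k % T) := by
      intro k
      have : ∀ q r, walk f g x0 (r + q * T) = walk f g x0 r := by
        intro q
        induction q with
        | zero => simp
        | succ q ih =>
          intro r
          rw [show r + (q+1)*T = (r + q*T) + T by ring, hT, hper, ih]
      conv_lhs => rw [← Nat.mod_add_div' k T]
      rw [this]
    have hm2' : walk f g x0 (m2 % T) = c2 := by rw [← hmod]; exact hm2
    have hm2T : m2 % T = m2 := by
      by_contra hne
      have : m2 % T < m2 := by
        rcases Nat.lt_or_ge m2 T with h | h
        · rw [Nat.mod_eq_of_lt h] at hne; omega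
        · have := Nat.mod_lt m2 (show 0 < T by omega); omega
      exact hm2min _ this hm2'
    -- so m2 < T = 2*m1+2, and m1 < m2, so m2 = m1 + 1 + r with r ≤ m1
    have hm2lt : m2 ≤ 2*m1 + 1 := by
      have := Nat.mod_lt m2 (show 0 < T by omega)
      omega
    set r := m2 - (m1 + 1) with hr
    have hrle : r ≤ m1 := by omega
    have := walk_reflect hf hg hm1odd hfix r hrle
    rw [show m1 + 1 + r = m2 by omega, hm2] at this
    exact hm2min (m1 - r) (by omega) this.symm
  rcases lt_trichotomy j l with h | h | h
  · exact key a b j l hjodd hja hlb hlmin ha h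
  · exact hab (by rw [← hja, h, hlb])
  · exact key b a l j hlodd hlb hja hjmin hb h


section ZH
variable {p : ℕ}

instance : NeZero (2*p+1) := ⟨by omega⟩

lemma val_one' (hp : 1 ≤ p) : (1 : ZMod (2*p+1)).val = 1 := by
  haveI : Fact (1 < 2*p+1) := ⟨by omega⟩
  exact ZMod.val_one _

lemma val_two' (hp : 1 ≤ p) : (2 : ZMod (2*p+1)).val = 2 := by
  have h : ((2:ℕ) : ZMod (2*p+1)) = 2 := by norm_cast
  rw [← h, ZMod.val_cast_of_lt (by omega)]

lemma val_add_one (hp : 1 ≤ p) (x : ZMod (2*p+1)) (h : x.val + 1 < 2*p+1) :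
    (x+1).val = x.val + 1 := by
  rw [ZMod.val_add, val_one' hp, Nat.mod_eq_of_lt h]

lemma val_add_one_top (hp : 1 ≤ p) (x : ZMod (2*p+1)) (h : x.val = 2*p) :
    (x+1).val = 0 := by
  rw [ZMod.val_add, val_one' hp, h]
  simp

lemma val_sub_one (hp : 1 ≤ p) (x : ZMod (2*p+1)) (h : 1 ≤ x.val) :
    (x-1).val = x.val - 1 := by
  have h2 : (x - 1) + 1 = x := by ring
  have hw := ZMod.val_lt (x - 1)
  rcases Nat.lt_or_ge ((x-1).val + 1) (2*p+1) with hlt | hge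
  · have h3 := val_add_one hp (x-1) hlt
    rw [h2] at h3; omega
  · have hw' : (x-1).val = 2*p := by omega
    have h4 := val_add_one_top hp (x-1) hw'
    rw [h2] at h4; omega

lemma neg_val' (x : ZMod (2*p+1)) (h : x ≠ 0) : (-x).val = 2*p+1 - x.val := by
  rw [ZMod.neg_val]; simp [h]

lemma eq_of_val_eq {x y : ZMod (2*p+1)} (h : x.val = y.val) : x = y :=
  ZMod.val_injective _ h

lemma one_ne_zero' (hp : 1 ≤ p) : (1 : ZMod (2*p+1)) ≠ 0 := by
  intro h
  have := val_one' (p := p) hp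
  rw [h, ZMod.val_zero] at this; omega

lemma two_ne_zero' (hp : 1 ≤ p) : (2 : ZMod (2*p+1)) ≠ 0 := by
  intro h
  have := val_two' (p := p) hp
  rw [h, ZMod.val_zero] at this; omega

lemma val_neg_one (hp : 1 ≤ p) : (-1 : ZMod (2*p+1)).val = 2*p := by
  rw [neg_val' _ (one_ne_zero' hp), val_one' hp]; omega

lemma val_neg_two (hp : 1 ≤ p) : (-2 : ZMod (2*p+1)).val = 2*p - 1 := by
  rw [neg_val' _ (two_ne_zero' hp), val_two' hp]
  omega

/-- the pairing involution: pairs `{3,4},{5,6},…,{n-4,n-3}` (vals), fixing everything else. -/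
def pr (p : ℕ) (x : ZMod (2*p+1)) : ZMod (2*p+1) :=
  if x.val % 2 = 1 ∧ 3 ≤ x.val ∧ x.val + 4 ≤ 2*p+1 then x + 1
  else if x.val % 2 = 0 ∧ 4 ≤ x.val ∧ x.val + 3 ≤ 2*p+1 then x - 1
  else x

lemma pr_eq_add (hp : 1 ≤ p) {x : ZMod (2*p+1)}
    (h : x.val % 2 = 1 ∧ 3 ≤ x.val ∧ x.val + 4 ≤ 2*p+1) : pr p x = x + 1 := if_pos h

lemma pr_eq_sub (hp : 1 ≤ p) {x : ZMod (2*p+1)}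
    (h : x.val % 2 = 0 ∧ 4 ≤ x.val ∧ x.val + 3 ≤ 2*p+1) : pr p x = x - 1 := by
  unfold pr
  rw [if_neg (by omega), if_pos h]

lemma pr_eq_self (hp : 1 ≤ p) {x : ZMod (2*p+1)}
    (h : ¬(x.val % 2 = 1 ∧ 3 ≤ x.val ∧ x.val + 4 ≤ 2*p+1))
    (h' : ¬(x.val % 2 = 0 ∧ 4 ≤ x.val ∧ x.val + 3 ≤ 2*p+1)) : pr p x = x := by
  unfold pr
  rw [if_neg h, if_neg h']

lemma pr_invol (hp : 1 ≤ p) : Involutive (pr p) := by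
  intro x
  by_cases h1 : x.val % 2 = 1 ∧ 3 ≤ x.val ∧ x.val + 4 ≤ 2*p+1
  · rw [pr_eq_add hp h1]
    have hv : (x+1).val = x.val + 1 := val_add_one hp x (by omega)
    rw [pr_eq_sub hp (by omega)]
    ring
  · by_cases h2 : x.val % 2 = 0 ∧ 4 ≤ x.val ∧ x.val + 3 ≤ 2*p+1
    · rw [pr_eq_sub hp h2]
      have hv : (x-1).val = x.val - 1 := val_sub_one hp x (by omega)
      rw [pr_eq_add hp (by omega)]
      ring
    · rw [pr_eq_self hp h1 h2, pr_eq_self hp h1 h2]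

lemma pr_neg (hp : 1 ≤ p) (x : ZMod (2*p+1)) : pr p (-x) = -(pr p x) := by
  by_cases h0 : x = 0
  · subst h0
    rw [neg_zero, pr_eq_self hp (by simp) (by simp), neg_zero]
  · have hx1 : 1 ≤ x.val := by
      have := ZMod.val_lt x
      rcases Nat.eq_zero_or_pos x.val with h | h
      · exact absurd (eq_of_val_eq (by simpa using h)) h0
      · omega
    have hxlt := ZMod.val_lt x
    have hnv : (-x).val = 2*p+1 - x.val := neg_val' x h0
    by_cases h1 : x.val % 2 = 1 ∧ 3 ≤ x.val ∧ x.val + 4 ≤ 2*p+1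
    · rw [pr_eq_add hp h1, pr_eq_sub hp (by omega)]
      ring
    · by_cases h2 : x.val % 2 = 0 ∧ 4 ≤ x.val ∧ x.val + 3 ≤ 2*p+1
      · rw [pr_eq_sub hp h2, pr_eq_add hp (by omega)]
        ring
      · rw [pr_eq_self hp h1 h2, pr_eq_self hp (by omega) (by omega)]

lemma pr_zero (hp : 1 ≤ p) : pr p 0 = 0 :=
  pr_eq_self hp (by simp) (by simp)

lemma pr_two (hp : 1 ≤ p) : pr p 2 = 2 := by
  have h := val_two' (p := p) hp
  exact pr_eq_self hp (by omega) (by omega)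

lemma pr_neg_two (hp : 1 ≤ p) : pr p (-2) = -2 := by
  have h := val_neg_two (p := p) hp
  exact pr_eq_self hp (by omega) (by omega)

end ZH

-- ===== graph part =====
section Graph
variable {V : Type*} [Fintype V] [DecidableEq V] {p : ℕ}
variable (H : SimpleGraph V) [DecidableRel H.Adj] (u : ZMod (2*p+1) → V)

/-- a chord: an edge of `H` between two non-consecutive cycle positions. -/
def Chord (x y : ZMod (2*p+1)) : Prop :=
  H.Adj (u x) (u y) ∧ y ≠ x + 1 ∧ y ≠ x - 1

variable {H u}

lemma Chord.symm {x y : ZMod (2*p+1)} (h : Chord H u x y) : Chord H u y x := by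
  refine ⟨h.1.symm, fun hx => h.2.2 ?_, fun hx => h.2.1 ?_⟩
  · rw [hx]; ring
  · rw [hx]; ring

section WithHyps
variable (hp : 1 ≤ p) (hmax : ∀ w, H.degree w ≤ 3)
variable (hbij : Function.Bijective u)
variable (hcyc : ∀ j, H.Adj (u j) (u (j+1)))

include hp hmax hbij hcyc

lemma chord_unique {x y y' : ZMod (2*p+1)} (h : Chord H u x y) (h' : Chord H u x y') :
    y = y' := by
  by_contra hne
  have hinj := hbij.injective
  have h2 : (2 : ZMod (2*p+1)) ≠ 0 := two_ne_zero' hp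
  have hd1 : x + 1 ≠ x - 1 := by
    intro hh
    apply h2
    linear_combination hh
  have hsub : ({u (x+1), u (x-1), u y, u y'} : Finset V) ⊆ H.neighborFinset (u x) := by
    intro w hw
    rw [SimpleGraph.mem_neighborFinset]
    simp only [Finset.mem_insert, Finset.mem_singleton] at hw
    rcases hw with rfl | rfl | rfl | rfl
    · exact hcyc x
    · have := hcyc (x-1)
      rw [show x - 1 + 1 = x by ring] at this
      exact this.symm
    · exact h.1
    · exact h'.1
  have hcard : ({u (x+1), u (x-1), u y, u y'} : Finset V).card = 4 := by
    rw [Finset.card_insert_of_notMem, Finset.card_insert_of_notMem,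
      Finset.card_insert_of_notMem, Finset.card_singleton]
    · simp only [Finset.mem_singleton, hinj.eq_iff]
      exact hne
    · simp only [Finset.mem_insert, Finset.mem_singleton, hinj.eq_iff]
      push_neg
      exact ⟨fun hh => h.2.2 hh.symm, fun hh => h'.2.2 hh.symm⟩
    · simp only [Finset.mem_insert, Finset.mem_singleton, hinj.eq_iff]
      push_neg
      exact ⟨hd1, fun hh => h.2.1 hh.symm, fun hh => h'.2.1 hh.symm⟩
  have := Finset.card_le_card hsub
  have hdeg := hmax (u x)
  rw [SimpleGraph.degree] at hdeg
  omega

lemma no_chord_one {y : ZMod (2*p+1)} (h1 : H.degree (u 1) = 2) :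
    ¬ Chord H u 1 y := by
  intro h
  have hinj := hbij.injective
  have h2 : (2 : ZMod (2*p+1)) ≠ 0 := two_ne_zero' hp
  have hsub : ({u 0, u 2, u y} : Finset V) ⊆ H.neighborFinset (u 1) := by
    intro w hw
    rw [SimpleGraph.mem_neighborFinset]
    simp only [Finset.mem_insert, Finset.mem_singleton] at hw
    rcases hw with rfl | rfl | rfl
    · have := hcyc 0
      rw [show (0:ZMod (2*p+1)) + 1 = 1 by ring] at this
      exact this.symm
    · have := hcyc 1
      rw [show (1:ZMod (2*p+1)) + 1 = 2 by ring] at this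
      exact this
    · exact h.1
  have hy2 : y ≠ 2 := by
    intro hh; exact h.2.1 (by rw [hh]; ring)
  have hy0 : y ≠ 0 := by
    intro hh; exact h.2.2 (by rw [hh]; ring)
  have hcard : ({u 0, u 2, u y} : Finset V).card = 3 := by
    rw [Finset.card_insert_of_notMem, Finset.card_insert_of_notMem, Finset.card_singleton]
    · simp only [Finset.mem_singleton, hinj.eq_iff]
      exact fun hh => hy2 hh.symm
    · simp only [Finset.mem_insert, Finset.mem_singleton, hinj.eq_iff]
      push_neg
      exact ⟨fun hh => h2 hh.symm, fun hh => hy0 hh.symm⟩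
  have := Finset.card_le_card hsub
  rw [SimpleGraph.degree] at h1
  omega

lemma no_chord_neg_one {y : ZMod (2*p+1)} (h1 : H.degree (u (-1)) = 2) :
    ¬ Chord H u (-1) y := by
  intro h
  have hinj := hbij.injective
  have h2 : (2 : ZMod (2*p+1)) ≠ 0 := two_ne_zero' hp
  have hsub : ({u 0, u (-2), u y} : Finset V) ⊆ H.neighborFinset (u (-1)) := by
    intro w hw
    rw [SimpleGraph.mem_neighborFinset]
    simp only [Finset.mem_insert, Finset.mem_singleton] at hw
    rcases hw with rfl | rfl | rfl
    · have := hcyc (-1)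
      rw [show (-1:ZMod (2*p+1)) + 1 = 0 by ring] at this
      exact this
    · have := hcyc (-2)
      rw [show (-2:ZMod (2*p+1)) + 1 = -1 by ring] at this
      exact this.symm
    · exact h.1
  have hy2 : y ≠ -2 := by
    intro hh; exact h.2.2 (by rw [hh]; ring)
  have hy0 : y ≠ 0 := by
    intro hh; exact h.2.1 (by rw [hh]; ring)
  have hcard : ({u 0, u (-2), u y} : Finset V).card = 3 := by
    rw [Finset.card_insert_of_notMem, Finset.card_insert_of_notMem, Finset.card_singleton]
    · simp only [Finset.mem_singleton, hinj.eq_iff]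
      intro hh
      exact hy2 hh.symm
    · simp only [Finset.mem_insert, Finset.mem_singleton, hinj.eq_iff]
      push_neg
      constructor
      · intro hh
        apply h2
        linear_combination hh
      · exact fun hh => hy0 hh.symm
  have := Finset.card_le_card hsub
  rw [SimpleGraph.degree] at h1
  omega

end WithHyps

open Classical in
noncomputable def chf (H : SimpleGraph V) (u : ZMod (2*p+1) → V) (x : ZMod (2*p+1)) :
    ZMod (2*p+1) :=
  if h : ∃ y, Chord H u x y then h.choose else x

section WithHyps2
variable (hp : 1 ≤ p) (hmax : ∀ w, H.degree w ≤ 3)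
variable (hbij : Function.Bijective u)
variable (hcyc : ∀ j, H.Adj (u j) (u (j+1)))

include hp hmax hbij hcyc

lemma chf_eq {x y : ZMod (2*p+1)} (h : Chord H u x y) : chf H u x = y := by
  unfold chf
  rw [dif_pos ⟨y, h⟩]
  exact chord_unique hp hmax hbij hcyc (Exists.choose_spec (⟨y, h⟩ : ∃ y, Chord H u x y)) h

lemma chf_invol : Involutive (chf H u) := by
  intro x
  by_cases h : ∃ y, Chord H u x y
  · obtain ⟨y, hy⟩ := h
    rw [chf_eq hp hmax hbij hcyc hy]
    exact chf_eq hp hmax hbij hcyc hy.symm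
  · have hx : chf H u x = x := dif_neg h
    rw [hx, hx]

end WithHyps2

end Graph

-- ===== coloring part =====
section Coloring
variable {V : Type*} [Fintype V] [DecidableEq V] {p : ℕ}
variable (H : SimpleGraph V) [DecidableRel H.Adj] (u : ZMod (2*p+1) → V)

def Reach (x y : ZMod (2*p+1)) : Prop :=
  ReflTransGen (fun s t => t = pr p s ∨ t = chf H u s) x y

open Classical in
noncomputable def cc (x : ZMod (2*p+1)) : Fin 3 :=
  if x.val = 0 then 0 else if x.val = 1 then 1 else if x.val % 2 = 0 then 2
  else if Reach H u 0 x then 0 else 1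

open Classical in
noncomputable def col (x y : ZMod (2*p+1)) : Fin 3 :=
  if y = x + 1 then cc H u x
  else if x = y + 1 then cc H u y
  else if Reach H u 0 x ∨ Reach H u 0 y then 1 else 0

variable {H u}

lemma reach_refl : Reach H u 0 0 := ReflTransGen.refl

lemma reach_pr_iff (hp : 1 ≤ p) (x : ZMod (2*p+1)) :
    Reach H u 0 (pr p x) ↔ Reach H u 0 x := by
  constructor
  · intro h
    have h2 := h.tail (Or.inl (pr_invol hp x).symm)
    exact h2
  · intro h
    exact h.tail (Or.inl rfl)

lemma reach_chf_iff (hp : 1 ≤ p) (hmax : ∀ w, H.degree w ≤ 3)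
    (hbij : Function.Bijective u) (hcyc : ∀ j, H.Adj (u j) (u (j+1)))
    (x : ZMod (2*p+1)) :
    Reach H u 0 (chf H u x) ↔ Reach H u 0 x := by
  constructor
  · intro h
    exact h.tail (Or.inr (chf_invol hp hmax hbij hcyc x).symm)
  · intro h
    exact h.tail (Or.inr rfl)

-- cc computation lemmas
lemma cc_val0 {x : ZMod (2*p+1)} (h : x.val = 0) : cc H u x = 0 := if_pos h

lemma cc_val1 {x : ZMod (2*p+1)} (h : x.val = 1) : cc H u x = 1 := by
  unfold cc
  rw [if_neg (by omega), if_pos h]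

lemma cc_even {x : ZMod (2*p+1)} (h : x.val % 2 = 0) (h2 : 2 ≤ x.val) : cc H u x = 2 := by
  unfold cc
  rw [if_neg (by omega), if_neg (by omega), if_pos h]

open Classical in
lemma cc_odd {x : ZMod (2*p+1)} (h : x.val % 2 = 1) (h3 : 3 ≤ x.val) :
    cc H u x = if Reach H u 0 x then 0 else 1 := by
  unfold cc
  rw [if_neg (by omega), if_neg (by omega), if_neg (by omega)]

lemma cc_ne_two {x : ZMod (2*p+1)} (h : x.val % 2 = 1) (h3 : 3 ≤ x.val) :
    cc H u x ≠ 2 := by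
  rw [cc_odd h h3]
  by_cases hr : Reach H u 0 x
  · rw [if_pos hr]; decide
  · rw [if_neg hr]; decide

/-- VA : consecutive cycle edges get distinct colors. -/
lemma cc_ne_succ (hp : 1 ≤ p) (x : ZMod (2*p+1)) : cc H u x ≠ cc H u (x+1) := by
  have hlt := ZMod.val_lt x
  by_cases h0 : x.val = 0
  · rw [cc_val0 h0, cc_val1 (by rw [val_add_one hp x (by omega), h0])]
    decide
  by_cases h1 : x.val = 1
  · rw [cc_val1 h1, cc_even (by rw [val_add_one hp x (by omega), h1]) (by
      rw [val_add_one hp x (by omega), h1])]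
    decide
  by_cases htop : x.val = 2*p
  · rw [cc_val0 (val_add_one_top hp x htop), cc_even (by omega) (by omega)]
    decide
  -- now 2 ≤ x.val ≤ 2p-1
  have hv : (x+1).val = x.val + 1 := val_add_one hp x (by omega)
  rcases Nat.mod_two_eq_zero_or_one x.val with he | ho
  · rw [cc_even he (by omega)]
    exact (cc_ne_two (by omega) (by omega)).symm
  · rw [cc_even (x := x+1) (by omega) (by omega)]
    exact cc_ne_two ho (by omega)

open Classical in
lemma chord_col_ne (hp : 1 ≤ p) (hmax : ∀ w, H.degree w ≤ 3)
    (hbij : Function.Bijective u) (hcyc : ∀ j, H.Adj (u j) (u (j+1)))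
    (h1 : H.degree (u 1) = 2) (h1' : H.degree (u (-1)) = 2)
    (hA : ¬ Reach H u 0 2)
    {z y : ZMod (2*p+1)} (hch : Chord H u z y) :
    (if Reach H u 0 z ∨ Reach H u 0 y then (1 : Fin 3) else 0) ≠ cc H u z ∧
    (if Reach H u 0 z ∨ Reach H u 0 y then (1 : Fin 3) else 0) ≠ cc H u (z-1) := by
  have hyz : chf H u z = y := chf_eq hp hmax hbij hcyc hch
  have hiff : Reach H u 0 y ↔ Reach H u 0 z := by
    rw [← hyz]; exact reach_chf_iff hp hmax hbij hcyc z
  have horz : (Reach H u 0 z ∨ Reach H u 0 y) ↔ Reach H u 0 z :=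
    ⟨fun h => h.elim id hiff.mp, Or.inl⟩
  rw [if_congr horz rfl rfl]
  -- endpoint is not 1 and not -1
  have hz1 : z ≠ 1 := by
    rintro rfl
    exact no_chord_one hp hmax hbij hcyc h1 hch
  have hzm1 : z ≠ -1 := by
    rintro rfl
    exact no_chord_neg_one hp hmax hbij hcyc h1' hch
  have hv1 : z.val ≠ 1 := by
    intro hh
    exact hz1 (eq_of_val_eq (by rw [hh, val_one' hp]))
  have hvtop : z.val ≠ 2*p := by
    intro hh
    exact hzm1 (eq_of_val_eq (by rw [hh, val_neg_one hp]))
  have hlt := ZMod.val_lt z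
  by_cases h0 : z.val = 0
  · have hz0 : z = 0 := (ZMod.val_eq_zero z).mp h0
    have hr : Reach H u 0 z := by rw [hz0]; exact reach_refl
    rw [if_pos hr, cc_val0 h0]
    constructor
    · decide
    · have : (z - 1).val = 2*p := by
        rw [hz0, show (0:ZMod (2*p+1)) - 1 = -1 by ring, val_neg_one hp]
      rw [cc_even (by omega) (by omega)]
      decide
  by_cases h2 : z.val = 2
  · have hz2 : z = 2 := eq_of_val_eq (by rw [h2, val_two' hp])
    have hr : ¬ Reach H u 0 z := by rw [hz2]; exact hA
    have hvm : (z-1).val = 1 := by rw [val_sub_one hp z (by omega), h2]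
    rw [if_neg hr, cc_even (by omega) (by omega), cc_val1 hvm]
    constructor <;> decide
  rcases Nat.mod_two_eq_zero_or_one z.val with he | ho
  · -- even, 4 ≤ z.val ≤ 2p-2
    have hb : 4 ≤ z.val ∧ z.val ≤ 2*p - 2 := by omega
    have hvm : (z-1).val = z.val - 1 := val_sub_one hp z (by omega)
    have hprz : pr p (z-1) = z := by
      rw [pr_eq_add hp (by omega)]
      ring
    have hiff2 : Reach H u 0 (z-1) ↔ Reach H u 0 z := by
      have h5 := reach_pr_iff (H := H) (u := u) hp (z-1)
      rw [hprz] at h5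
      exact h5.symm
    rw [cc_even he (by omega), cc_odd (x := z-1) (by omega) (by omega)]
    by_cases hr : Reach H u 0 z
    · rw [if_pos hr, if_pos (hiff2.mpr hr)]
      constructor <;> decide
    · rw [if_neg hr, if_neg (fun hh => hr (hiff2.mp hh))]
      constructor <;> decide
  · -- odd, 3 ≤ z.val
    have h3 : 3 ≤ z.val := by omega
    have hvm : (z-1).val = z.val - 1 := val_sub_one hp z (by omega)
    rw [cc_odd ho h3, cc_even (x := z-1) (by omega) (by omega)]
    by_cases hr : Reach H u 0 z
    · rw [if_pos hr, if_pos hr]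
      constructor <;> decide
    · rw [if_neg hr, if_neg hr]
      constructor <;> decide

end Coloring

-- ===== main colorability lemma =====
section MainCol
variable {V : Type*} [Fintype V] [DecidableEq V] {p : ℕ}
variable {H : SimpleGraph V} [DecidableRel H.Adj] {u : ZMod (2*p+1) → V}

lemma col_P (hp : 1 ≤ p) (z : ZMod (2*p+1)) : col H u z (z+1) = cc H u z := if_pos rfl

lemma col_M (hp : 1 ≤ p) (z : ZMod (2*p+1)) : col H u z (z-1) = cc H u (z-1) := by
  unfold col
  rw [if_neg, if_pos (by ring)]
  intro hh
  exact two_ne_zero' hp (by linear_combination -hh)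

open Classical in
lemma col_C (hp : 1 ≤ p) {z y : ZMod (2*p+1)} (hch : Chord H u z y) :
    col H u z y = if Reach H u 0 z ∨ Reach H u 0 y then 1 else 0 := by
  unfold col
  rw [if_neg hch.2.1, if_neg]
  intro hh
  exact hch.2.2 (by rw [hh]; ring)

open Classical in
lemma col_symm (hp : 1 ≤ p) (x y : ZMod (2*p+1)) : col H u x y = col H u y x := by
  by_cases hxy : y = x + 1
  · by_cases hyx : x = y + 1
    · exfalso
      rw [hxy] at hyx
      exact two_ne_zero' hp (by linear_combination -hyx)
    · unfold col
      rw [if_pos hxy, if_neg hyx, if_pos hxy]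
  · by_cases hyx : x = y + 1
    · unfold col
      rw [if_neg hxy, if_pos hyx, if_pos hyx]
    · unfold col
      rw [if_neg hxy, if_neg hyx, if_neg hyx, if_neg hxy]
      exact if_congr or_comm rfl rfl

lemma classify (hadj : H.Adj (u z) (u y)) :
    y = z + 1 ∨ y = z - 1 ∨ Chord H u z y := by
  by_cases h1 : y = z + 1
  · exact Or.inl h1
  by_cases h2 : y = z - 1
  · exact Or.inr (Or.inl h2)
  exact Or.inr (Or.inr ⟨hadj, h1, h2⟩)

lemma colorable_of_unreach (hp : 1 ≤ p) (hmax : ∀ w, H.degree w ≤ 3)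
    (hbij : Function.Bijective u) (hcyc : ∀ j, H.Adj (u j) (u (j+1)))
    (h1 : H.degree (u 1) = 2) (h1' : H.degree (u (-1)) = 2)
    (hA : ¬ Reach H u 0 2) :
    H.lineGraph.Colorable 3 := by
  classical
  set E := Equiv.ofBijective u hbij with hE
  have hEu : ∀ a : V, u (E.symm a) = a := fun a => E.apply_symm_apply a
  refine ⟨SimpleGraph.Coloring.mk
    (fun e => Sym2.lift ⟨fun a b => col H u (E.symm a) (E.symm b),
      fun a b => col_symm hp _ _⟩ e.val) ?_⟩
  intro e1 e2 hadj
  rw [SimpleGraph.lineGraph_adj_iff_exists] at hadj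
  obtain ⟨hne, q, hq1, hq2⟩ := hadj
  have hb1 := Sym2.other_spec hq1
  have hb2 := Sym2.other_spec hq2
  set b1 := Sym2.Mem.other hq1 with hb1d
  set b2 := Sym2.Mem.other hq2 with hb2d
  have hadj1 : H.Adj q b1 := by
    have := e1.2
    rw [← hb1] at this
    exact (H.mem_edgeSet).mp this
  have hadj2 : H.Adj q b2 := by
    have := e2.2
    rw [← hb2] at this
    exact (H.mem_edgeSet).mp this
  have hbne : b1 ≠ b2 := by
    intro hh
    apply hne
    apply Subtype.coe_injective
    refine hb1.symm.trans ?_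
    rw [hh]
    exact hb2
  set z := E.symm q with hz
  set y1 := E.symm b1 with hy1
  set y2 := E.symm b2 with hy2
  have hq' : u z = q := hEu q
  have hb1' : u y1 = b1 := hEu b1
  have hb2' : u y2 = b2 := hEu b2
  have hadj1' : H.Adj (u z) (u y1) := by rw [hq', hb1']; exact hadj1
  have hadj2' : H.Adj (u z) (u y2) := by rw [hq', hb2']; exact hadj2
  have hyne : y1 ≠ y2 := fun hh => hbne (by rw [← hb1', ← hb2', hh])
  have hc1 : Sym2.lift ⟨fun a b => col H u (E.symm a) (E.symm b),
      fun a b => col_symm hp _ _⟩ e1.val = col H u z y1 := by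
    rw [← hb1, Sym2.lift_mk]
  have hc2 : Sym2.lift ⟨fun a b => col H u (E.symm a) (E.symm b),
      fun a b => col_symm hp _ _⟩ e2.val = col H u z y2 := by
    rw [← hb2, Sym2.lift_mk]
  intro hcontra
  have hcon : col H u z y1 = col H u z y2 := by
    rw [← hc1, ← hc2]
    exact hcontra
  clear hcontra
  rcases classify hadj1' with hP1 | hM1 | hC1 <;> rcases classify hadj2' with hP2 | hM2 | hC2
  · exact absurd (hP1.trans hP2.symm) hyne
  · rw [hP1, hM2, col_P hp, col_M hp] at hcon
    have := cc_ne_succ (H := H) (u := u) hp (z-1)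
    rw [show z - 1 + 1 = z by ring] at this
    exact this hcon.symm
  · rw [hP1, col_P hp, col_C hp hC2] at hcon
    exact (chord_col_ne hp hmax hbij hcyc h1 h1' hA hC2).1 hcon.symm
  · rw [hM1, hP2, col_M hp, col_P hp] at hcon
    have := cc_ne_succ (H := H) (u := u) hp (z-1)
    rw [show z - 1 + 1 = z by ring] at this
    exact this hcon
  · exact absurd (hM1.trans hM2.symm) hyne
  · rw [hM1, col_M hp, col_C hp hC2] at hcon
    exact (chord_col_ne hp hmax hbij hcyc h1 h1' hA hC2).2 hcon.symm
  · rw [hP2, col_C hp hC1, col_P hp] at hcon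
    exact (chord_col_ne hp hmax hbij hcyc h1 h1' hA hC1).1 hcon
  · rw [hM2, col_C hp hC1, col_M hp] at hcon
    exact (chord_col_ne hp hmax hbij hcyc h1 h1' hA hC1).2 hcon
  · exact absurd (chord_unique hp hmax hbij hcyc hC1 hC2) hyne

end MainCol

-- ===== reflection transfer =====
section Refl
variable {V : Type*} [Fintype V] [DecidableEq V] {p : ℕ}
variable {H : SimpleGraph V} [DecidableRel H.Adj] {u : ZMod (2*p+1) → V}

lemma chord_neg_iff {x y : ZMod (2*p+1)} :
    Chord H (fun j => u (-j)) x y ↔ Chord H u (-x) (-y) := by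
  constructor
  · rintro ⟨ha, h1, h2⟩
    refine ⟨ha, fun hh => h2 ?_, fun hh => h1 ?_⟩
    · linear_combination -hh
    · linear_combination -hh
  · rintro ⟨ha, h1, h2⟩
    refine ⟨ha, fun hh => h2 ?_, fun hh => h1 ?_⟩
    · rw [hh]; ring
    · rw [hh]; ring

lemma chf_neg (hp : 1 ≤ p) (hmax : ∀ w, H.degree w ≤ 3)
    (hbij : Function.Bijective u) (hcyc : ∀ j, H.Adj (u j) (u (j+1)))
    (hbijw : Function.Bijective (fun j => u (-j)))
    (hcycw : ∀ j : ZMod (2*p+1), H.Adj (u (-j)) (u (-(j+1))))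
    (x : ZMod (2*p+1)) :
    chf H (fun j => u (-j)) x = - chf H u (-x) := by
  have hcycw' : ∀ j : ZMod (2*p+1), H.Adj ((fun j => u (-j)) j) ((fun j => u (-j)) (j+1)) :=
    hcycw
  by_cases h : ∃ y, Chord H (fun j => u (-j)) x y
  · obtain ⟨y, hy⟩ := h
    have h2 : Chord H u (-x) (-y) := chord_neg_iff.mp hy
    rw [chf_eq hp hmax hbijw hcycw' hy, chf_eq hp hmax hbij hcyc h2, neg_neg]
  · have h' : ¬ ∃ z, Chord H u (-x) z := by
      rintro ⟨z, hz⟩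
      refine h ⟨-z, chord_neg_iff.mpr ?_⟩
      rwa [neg_neg]
    have e1 : chf H (fun j => u (-j)) x = x := by unfold chf; rw [dif_neg h]
    have e2 : chf H u (-x) = -x := by unfold chf; rw [dif_neg h']
    rw [e1, e2, neg_neg]

end Refl
end Stmt11Aux

/-- The chromatic index of `H`, i.e. the chromatic number of its line graph. -/
noncomputable def SimpleGraph.chromaticIndex {V : Type*} (H : SimpleGraph V) : ℕ∞ :=
  H.lineGraph.chromaticNumber

open Stmt11Aux in
/-- Lemma 1, case 3: a connected Hamiltonian subcubic graph on an odd number `2p+1` of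
vertices, with an index `i` such that both cycle-neighbors `v_{i-1}`, `v_{i+1}` have
degree 2, has chromatic index 3. -/
theorem stmt11 {V : Type*} [Fintype V] [DecidableEq V] (H : SimpleGraph V)
    [DecidableRel H.Adj] (p : ℕ) (hp : 1 ≤ p)
    (hconn : H.Connected) (hmax : ∀ w, H.degree w ≤ 3)
    (v : ZMod (2 * p + 1) → V) (hbij : Function.Bijective v)
    (hcyc : ∀ i, H.Adj (v i) (v (i + 1)))
    (i : ZMod (2 * p + 1))
    (h1 : H.degree (v (i - 1)) = 2) (h2 : H.degree (v (i + 1)) = 2) :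
    H.chromaticIndex = 3 := by
  classical
  -- ===== lower bound : odd closed walk in the line graph =====
  have hEmem : ∀ k : ℕ, s(v (k : ZMod (2*p+1)), v ((k : ZMod (2*p+1)) + 1)) ∈ H.edgeSet :=
    fun k => (H.mem_edgeSet).mpr (hcyc _)
  let Ee : ℕ → H.edgeSet := fun k => ⟨_, hEmem k⟩
  have hinj := hbij.injective
  have hadjE : ∀ k : ℕ, H.lineGraph.Adj (Ee k) (Ee (k+1)) := by
    intro k
    rw [SimpleGraph.lineGraph_adj_iff_exists]
    constructor
    · intro hh
      have hh2 : s(v (k : ZMod (2*p+1)), v ((k : ZMod (2*p+1)) + 1)) =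
          s(v ((k+1 : ℕ) : ZMod (2*p+1)), v (((k+1:ℕ) : ZMod (2*p+1)) + 1)) :=
        congrArg Subtype.val hh
      rw [show (((k+1:ℕ)) : ZMod (2*p+1)) = (k : ZMod (2*p+1)) + 1 by push_cast; ring]
        at hh2
      rw [Sym2.eq_iff] at hh2
      rcases hh2 with ⟨ha, _⟩ | ⟨ha, _⟩
      · have := hinj ha
        exact one_ne_zero' hp (by linear_combination -this)
      · have := hinj ha
        exact two_ne_zero' hp (by linear_combination -this)
    · refine ⟨v ((k : ZMod (2*p+1)) + 1), ?_, ?_⟩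
      · exact Sym2.mem_mk_right _ _
      · show v ((k : ZMod (2*p+1)) + 1) ∈
          s(v ((k+1 : ℕ) : ZMod (2*p+1)), v (((k+1:ℕ) : ZMod (2*p+1)) + 1))
        rw [show (((k+1:ℕ)) : ZMod (2*p+1)) = (k : ZMod (2*p+1)) + 1 by push_cast; ring]
        exact Sym2.mem_mk_left _ _
  have W : ∀ k : ℕ, ∃ w : H.lineGraph.Walk (Ee 0) (Ee k), w.length = k := by
    intro k
    induction k with
    | zero => exact ⟨SimpleGraph.Walk.nil, rfl⟩
    | succ k ih =>
      obtain ⟨w, hw⟩ := ih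
      exact ⟨w.concat (hadjE k), by rw [SimpleGraph.Walk.length_concat, hw]⟩
  obtain ⟨w0, hw0⟩ := W (2*p+1)
  have hE0 : Ee (2*p+1) = Ee 0 := by
    apply Subtype.ext
    show s(v ((2*p+1 : ℕ) : ZMod (2*p+1)), _) = s(v ((0:ℕ) : ZMod (2*p+1)), _)
    rw [ZMod.natCast_self]
    norm_num
  have lower : 3 ≤ H.lineGraph.chromaticNumber := by
    refine SimpleGraph.Walk.three_le_chromaticNumber_of_odd_loop (w0.copy rfl hE0) ?_
    rw [SimpleGraph.Walk.length_copy, hw0]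
    exact ⟨p, by omega⟩
  -- ===== upper bound =====
  set u : ZMod (2*p+1) → V := fun j => v (i + j) with hu
  have hbiju : Function.Bijective u := by
    have hcomp : u = v ∘ (fun j => i + j) := rfl
    rw [hcomp]
    exact hbij.comp (Equiv.addLeft i).bijective
  have hcycu : ∀ j, H.Adj (u j) (u (j+1)) := by
    intro j
    have := hcyc (i + j)
    rw [show i + j + 1 = i + (j + 1) by ring] at this
    exact this
  have h1u : H.degree (u 1) = 2 := h2
  have h1u' : H.degree (u (-1)) = 2 := by
    show H.degree (v (i + -1)) = 2
    rw [show i + -1 = i - 1 by ring]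
    exact h1
  have hval2 := val_two' (p := p) hp
  have hvalneg2 := val_neg_two (p := p) hp
  have h2ne : (2 : ZMod (2*p+1)) ≠ -2 := by
    intro hh
    rw [← ZMod.val_injective _ |>.eq_iff] at hh
    omega
  have h2ne0 : (2 : ZMod (2*p+1)) ≠ 0 := two_ne_zero' hp
  have hneg2ne0 : (-2 : ZMod (2*p+1)) ≠ 0 := by
    intro hh
    rw [hh, ZMod.val_zero] at hvalneg2
    omega
  have hdich := two_invol_dichotomy (f := pr p) (g := chf H u) (x0 := 0) (a := 2) (b := -2)
      (pr_invol hp) (chf_invol hp hmax hbiju hcycu) (pr_zero hp) (pr_two hp) (pr_neg_two hp)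
      h2ne h2ne0 hneg2ne0
  have hcolorable : H.lineGraph.Colorable 3 := by
    rcases hdich with hA | hB
    · exact colorable_of_unreach hp hmax hbiju hcycu h1u h1u' hA
    · -- reflect
      have hbijw : Function.Bijective (fun j : ZMod (2*p+1) => u (-j)) := by
        have hcomp : (fun j : ZMod (2*p+1) => u (-j)) = u ∘ (fun j => -j) := rfl
        rw [hcomp]
        exact hbiju.comp (Equiv.neg _).bijective
      have hcycw : ∀ j : ZMod (2*p+1), H.Adj (u (-j)) (u (-(j+1))) := by
        intro j
        have := (hcycu (-(j+1)))
        rw [show -(j+1) + 1 = -j by ring] at this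
        exact this.symm
      have hcycw' : ∀ j : ZMod (2*p+1),
          H.Adj ((fun j => u (-j)) j) ((fun j => u (-j)) (j+1)) := hcycw
      have h1w : H.degree ((fun j : ZMod (2*p+1) => u (-j)) 1) = 2 := h1u'
      have h1w' : H.degree ((fun j : ZMod (2*p+1) => u (-j)) (-1)) = 2 := by
        show H.degree (u (-(-1))) = 2
        rw [neg_neg]
        exact h1u
      have hA_w : ¬ Reach H (fun j => u (-j)) 0 2 := by
        intro hr
        apply hB
        have hlift := Relation.ReflTransGen.lift (r := fun s t : ZMod (2*p+1) =>
            t = pr p s ∨ t = chf H (fun j => u (-j)) s)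
          (p := fun s t : ZMod (2*p+1) => t = pr p s ∨ t = chf H u s)
          (fun x => -x) ?_ _ _ hr
        · show Reach H u 0 (-2)
          unfold Reach
          simpa [Function.onFun] using hlift
        · intro a b hab
          show -b = pr p (-a) ∨ -b = chf H u (-a)
          rcases hab with hab | hab
          · left
            rw [hab, pr_neg hp]
          · right
            rw [hab, chf_neg hp hmax hbiju hcycu hbijw hcycw, neg_neg]
      exact colorable_of_unreach hp hmax hbijw hcycw' h1w h1w' hA_w
  have upper : H.lineGraph.chromaticNumber ≤ (3:ℕ) := hcolorable.chromaticNumber_le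
  show H.lineGraph.chromaticNumber = 3
  refine le_antisymm ?_ lower
  exact_mod_cast upper
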